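/- Let X be a complete CAT(0) space, n ≥ 1, and φ : ℝⁿ → X an isometric embedding with image E (an n-flat); set x = φ(0). Let Y be the union of all n-flats of X parallel to E, and let Z = {y ∈ Y : d(y,x) ≤ d(y,e) for all e ∈ E}. Then: (a) Y is a closed convex subset of X containing E; (b) Z is closed and convex; (c) there is a bijection Φ : ℝⁿ × Z → Y such that Φ(v,x) = φ(v) for all v ∈ ℝⁿ, Φ(0,z) = z for all z ∈ Z, and d(Φ(v,z), Φ(v',z'))² = ‖v−v'‖² + d(z,z')² for all v,v' ∈ ℝⁿ and z,z' ∈ Z. -/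

import Mathlib

/-- `m` is a midpoint of `x` and `y`. -/
def IsMidpoint {X : Type*} [MetricSpace X] (x y m : X) : Prop :=
  dist x m = dist x y / 2 ∧ dist y m = dist x y / 2

/-- A complete metric space is CAT(0) if midpoints exist and the
Bruhat–Tits inequality holds. -/
def IsCAT0 (X : Type*) [MetricSpace X] : Prop :=
  (∀ x y : X, ∃ m : X, IsMidpoint x y m) ∧
  ∀ x y z m : X, IsMidpoint x y m →
    dist z m ^ 2 ≤ dist z x ^ 2 / 2 + dist z y ^ 2 / 2 - dist x y ^ 2 / 4

/-- A subset is convex if it contains every midpoint of any two of its points. -/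
def ConvexSubset {X : Type*} [MetricSpace X] (C : Set X) : Prop :=
  ∀ x ∈ C, ∀ y ∈ C, ∀ m : X, IsMidpoint x y m → m ∈ C

/-- An `n`-flat in `X`: the image of an isometric embedding of `ℝⁿ`. -/
def IsNFlat {X : Type*} [MetricSpace X] (n : ℕ) (F : Set X) : Prop :=
  ∃ ψ : EuclideanSpace ℝ (Fin n) → X, Isometry ψ ∧ Set.range ψ = F

/-- Two subsets `A`, `B` are parallel if the distance to `B` is constant on `A`
and the distance to `A` is constant on `B`. -/
def ParallelSets {X : Type*} [MetricSpace X] (A B : Set X) : Prop :=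
  (∃ c : ℝ, ∀ a ∈ A, Metric.infDist a B = c) ∧
  (∃ c : ℝ, ∀ b ∈ B, Metric.infDist b A = c)

namespace CAT0W

section Basics
variable {X : Type*} [MetricSpace X]

theorem le_of_sq_le_sq {a b : ℝ} (ha : 0 ≤ a) (hb : 0 ≤ b) (h : a ^ 2 ≤ b ^ 2) : a ≤ b := by
  nlinarith

theorem eq_of_sq_eq {a b : ℝ} (ha : 0 ≤ a) (hb : 0 ≤ b) (h : a ^ 2 = b ^ 2) : a = b := by
  nlinarith

theorem midcomm {x y m : X} (h : IsMidpoint x y m) : IsMidpoint y x m :=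
  ⟨by rw [h.2, dist_comm], by rw [h.1, dist_comm]⟩

theorem midpoint_unique (hX : IsCAT0 X) {x y m m' : X} (h : IsMidpoint x y m)
    (h' : IsMidpoint x y m') : m = m' := by
  have b := hX.2 x y m' m h
  rw [dist_comm m' x, dist_comm m' y] at b
  rw [h'.1, h'.2] at b
  have h2 : dist m' m = 0 := by nlinarith [dist_nonneg (x := m') (y := m)]
  exact (dist_eq_zero.mp h2).symm

noncomputable def mpt (hX : IsCAT0 X) (x y : X) : X := (hX.1 x y).choose

theorem mpt_spec (hX : IsCAT0 X) (x y : X) : IsMidpoint x y (mpt hX x y) :=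
  (hX.1 x y).choose_spec

theorem mpt_eq (hX : IsCAT0 X) {x y m : X} (h : IsMidpoint x y m) : mpt hX x y = m :=
  midpoint_unique hX (mpt_spec hX x y) h

/-- the four-point midpoint inequality (†). -/
theorem four (hX : IsCAT0 X) {x y x' y' m m' : X} (hm : IsMidpoint x y m)
    (hm' : IsMidpoint x' y' m') :
    dist m m' ^ 2 ≤ (dist x x' ^ 2 + dist y y' ^ 2 + dist x y' ^ 2 + dist x' y ^ 2
      - dist x y ^ 2 - dist x' y' ^ 2) / 4 := by
  have b1 := hX.2 x' y' m m' hm'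
  have b2 := hX.2 x y x' m hm
  have b3 := hX.2 x y y' m hm
  rw [dist_comm m x', dist_comm m y'] at b1
  rw [dist_comm x' x] at b2
  rw [dist_comm y' x, dist_comm y' y] at b3
  linarith

theorem half_left (hX : IsCAT0 X) {x y y' m m' : X} (hm : IsMidpoint x y m)
    (hm' : IsMidpoint x y' m') : dist m m' ≤ dist y y' / 2 := by
  have h := four hX hm hm'
  simp only [dist_self] at h
  apply le_of_sq_le_sq dist_nonneg (by positivity)
  have : dist x y' = dist y' x := dist_comm _ _
  nlinarith [dist_nonneg (x := y) (y := y')]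

theorem busemann (hX : IsCAT0 X) {x y x' y' m m' : X} (hm : IsMidpoint x y m)
    (hm' : IsMidpoint x' y' m') : dist m m' ≤ (dist x x' + dist y y') / 2 := by
  obtain ⟨m₁, hm₁⟩ := hX.1 x y'
  have h1 : dist m m₁ ≤ dist y y' / 2 := half_left hX hm hm₁
  have h2 : dist m₁ m' ≤ dist x x' / 2 := half_left hX (midcomm hm₁) (midcomm hm')
  calc dist m m' ≤ dist m m₁ + dist m₁ m' := dist_triangle _ _ _
    _ ≤ _ := by linarith

theorem dist_mid_le (hX : IsCAT0 X) {x y m : X} (hm : IsMidpoint x y m) (z : X) :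
    dist z m ≤ (dist z x + dist z y) / 2 := by
  have hz : IsMidpoint z z z := by constructor <;> simp
  have h := busemann hX hz hm
  simpa using h


end Basics
theorem le_of_forall_pos_le_add' {a b : ℝ} (h : ∀ ε : ℝ, 0 < ε → a ≤ b + ε) : a ≤ b := by
  by_contra hc
  push_neg at hc
  have := h ((a - b) / 2) (by linarith)
  linarith

section Proj

variable {n : ℕ} {X : Type*} [MetricSpace X]

local notation "V" => EuclideanSpace ℝ (Fin n)

/-- `p` is a nearest point of `F` to `a`. -/
def IsProj (F : Set X) (a p : X) : Prop := p ∈ F ∧ ∀ q ∈ F, dist a p ≤ dist a q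

open Classical in
noncomputable def pro (F : Set X) (a : X) : X :=
  if h : ∃ p, IsProj F a p then h.choose else a

theorem pro_spec {F : Set X} {a : X} (h : ∃ p, IsProj F a p) : IsProj F a (pro F a) := by
  rw [pro]
  rw [dif_pos h]
  exact h.choose_spec

theorem vdist {ψ : V → X} (hψ : Isometry ψ) (u v : V) : dist (ψ u) (ψ v) = ‖u - v‖ := by
  rw [hψ.dist_eq, dist_eq_norm]

theorem flat_mid {ψ : V → X} (hψ : Isometry ψ) (u v : V) :
    IsMidpoint (ψ u) (ψ v) (ψ ((2⁻¹ : ℝ) • (u + v))) := by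
  have h1 : u - (2⁻¹ : ℝ) • (u + v) = (2⁻¹ : ℝ) • (u - v) := by module
  have h2 : v - (2⁻¹ : ℝ) • (u + v) = -((2⁻¹ : ℝ) • (u - v)) := by module
  constructor
  · rw [vdist hψ, vdist hψ, h1, norm_smul]
    simp [norm_sub_rev]; ring
  · rw [vdist hψ, vdist hψ, h2, norm_neg, norm_smul]
    simp; ring

theorem proj_ex {ψ : V → X} (hψ : Isometry ψ) (a : X) : ∃ p, IsProj (Set.range ψ) a p := by
  have hcont : Continuous fun v : V => dist a (ψ v) := continuous_const.dist hψ.continuous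
  have hco : Filter.Tendsto (fun v : V => dist a (ψ v)) (Filter.cocompact V) Filter.atTop := by
    apply Filter.tendsto_atTop_mono (f := fun v : V => ‖v‖ + -dist (ψ 0) a)
    · intro v
      have ht := dist_triangle (ψ 0) a (ψ v)
      have : dist (ψ 0) (ψ v) = ‖v‖ := by rw [vdist hψ]; simp
      linarith
    · exact Filter.tendsto_atTop_add_const_right _ _ tendsto_norm_cocompact_atTop
  obtain ⟨v, hv⟩ := hcont.exists_forall_le hco
  exact ⟨ψ v, ⟨v, rfl⟩, by rintro q ⟨u, rfl⟩; exact hv u⟩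

theorem proj_uniq (hX : IsCAT0 X) {ψ : V → X} (hψ : Isometry ψ) {a p q : X}
    (hp : IsProj (Set.range ψ) a p) (hq : IsProj (Set.range ψ) a q) : p = q := by
  obtain ⟨⟨pv, rfl⟩, hpm⟩ := hp
  obtain ⟨⟨qv, rfl⟩, hqm⟩ := hq
  have hm := flat_mid hψ pv qv
  have hb := hX.2 _ _ a _ hm
  have h1 : dist a (ψ pv) ≤ dist a (ψ ((2⁻¹ : ℝ) • (pv + qv))) := hpm _ ⟨_, rfl⟩
  have h2 : dist a (ψ qv) ≤ dist a (ψ pv) := hqm _ ⟨_, rfl⟩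
  have h3 : dist a (ψ pv) ≤ dist a (ψ qv) := hpm _ ⟨_, rfl⟩
  have h4 : dist a (ψ pv) = dist a (ψ qv) := le_antisymm h3 h2
  have h5 : dist (ψ pv) (ψ qv) = 0 := by nlinarith [dist_nonneg (x := a) (y := ψ pv), dist_nonneg (x := ψ pv) (y := ψ qv)]
  rw [dist_eq_zero] at h5
  rw [h5]

theorem infDist_isProj {F : Set X} {a p : X} (h : IsProj F a p) :
    Metric.infDist a F = dist a p := by
  refine le_antisymm (Metric.infDist_le_dist_of_mem h.1) ?_
  rw [Metric.infDist_eq_iInf]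
  haveI : Nonempty F := ⟨⟨p, h.1⟩⟩
  exact le_ciInf fun q => h.2 q q.2

theorem pro_flat (hX : IsCAT0 X) {ψ : V → X} (hψ : Isometry ψ) (a : X) :
    IsProj (Set.range ψ) a (pro (Set.range ψ) a) := pro_spec (proj_ex hψ a)

/-- The variational inequality for projections onto flats. -/
theorem varIneq (hX : IsCAT0 X) {ψ : V → X} (hψ : Isometry ψ) {a p : X}
    (hp : IsProj (Set.range ψ) a p) {q : X} (hq : q ∈ Set.range ψ) :
    dist a p ^ 2 + dist p q ^ 2 ≤ dist a q ^ 2 := by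
  obtain ⟨qv, rfl⟩ := hq
  obtain ⟨⟨pv, rfl⟩, hpm⟩ := hp
  set w : V := qv - pv with hw
  set L : ℝ := ‖w‖ with hL
  have hLd : dist (ψ pv) (ψ qv) = L := by rw [vdist hψ, norm_sub_rev]
  set c : ℝ → X := fun t => ψ (pv + t • w) with hc
  have hcd : ∀ s t : ℝ, dist (c s) (c t) = |s - t| * L := by
    intro s t
    rw [hc]
    simp only
    rw [vdist hψ]
    have : pv + s • w - (pv + t • w) = (s - t) • w := by module
    rw [this, norm_smul]
    simp [hL]
  have hmidc : ∀ s t : ℝ, IsMidpoint (c s) (c t) (c ((s + t) / 2)) := by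
    intro s t
    constructor
    · rw [hcd, hcd]
      have : s - (s + t) / 2 = (s - t) / 2 := by ring
      rw [this, abs_div]
      simp; ring
    · rw [hcd, hcd]
      have : t - (s + t) / 2 = -((s - t) / 2) := by ring
      rw [this, abs_neg, abs_div, abs_two]
      ring
  have hc0 : c 0 = ψ pv := by simp [hc]
  have hmin : ∀ t : ℝ, dist a (ψ pv) ≤ dist a (c t) := fun t => hpm _ ⟨_, rfl⟩
  -- main estimate for each N
  have key : ∀ N : ℕ, 0 < N →
      dist a (ψ pv) ^ 2 + L ^ 2 - L ^ 2 / N ≤ dist a (ψ qv) ^ 2 := by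
    intro N hN
    set h : ℝ := 1 / (N : ℝ) with hh
    have hNpos : (0 : ℝ) < N := by exact_mod_cast hN
    have hhpos : 0 < h := by positivity
    set u : ℕ → ℝ := fun j => dist a (c ((j : ℝ) * h)) ^ 2 with hu
    have hbt : ∀ s : ℝ, u 0 ≤ dist a (c s) ^ 2 := by
      intro s
      have := hmin s
      rw [hu]
      simp only [Nat.cast_zero, zero_mul, hc0]
      nlinarith [dist_nonneg (x := a) (y := ψ pv)]
    have step : ∀ j : ℕ, u (j + 1) - u j ≥ 2 * (j : ℝ) * (h * L) ^ 2 := by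
      have rec' : ∀ j : ℕ, u (j + 2) - u (j + 1) ≥ u (j + 1) - u j + 2 * (h * L) ^ 2 := by
        intro j
        have hmj : IsMidpoint (c ((j : ℝ) * h)) (c ((j + 2 : ℝ) * h)) (c ((j + 1 : ℝ) * h)) := by
          have : ((j : ℝ) * h + (j + 2 : ℝ) * h) / 2 = (j + 1 : ℝ) * h := by ring
          rw [← this]
          exact hmidc _ _
        have hb := hX.2 _ _ a _ hmj
        have hd : dist (c ((j : ℝ) * h)) (c ((j + 2 : ℝ) * h)) = 2 * h * L := by
          rw [hcd]
          have : |(j : ℝ) * h - (j + 2 : ℝ) * h| = 2 * h := by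
            rw [show (j : ℝ) * h - (j + 2 : ℝ) * h = -(2 * h) by ring, abs_neg,
              abs_of_pos (by positivity)]
          rw [this]
        rw [hd] at hb
        have e1 : ((j + 2 : ℕ) : ℝ) = (j : ℝ) + 2 := by push_cast; ring
        have e2 : ((j + 1 : ℕ) : ℝ) = (j : ℝ) + 1 := by push_cast; ring
        rw [hu]
        simp only [e1, e2]
        nlinarith [hb]
      intro j
      induction j with
      | zero =>
        simp only [Nat.cast_zero]
        have h1 := hbt ((1 : ℝ) * h)
        have : u 1 = dist a (c ((1 : ℝ) * h)) ^ 2 := by rw [hu]; norm_num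
        rw [this] at *
        simp only [mul_zero, zero_mul]
        linarith [h1]
      | succ k ih =>
        have := rec' k
        push_cast
        push_cast at ih
        nlinarith [this, ih]
    have tot : ∀ j : ℕ, u 0 + (j : ℝ) * ((j : ℝ) - 1) * (h * L) ^ 2 ≤ u j := by
      intro j
      induction j with
      | zero => simp
      | succ k ih =>
        have := step k
        push_cast
        push_cast at ih
        nlinarith [this, ih]
    have hNh : (N : ℝ) * h = 1 := by rw [hh]; field_simp
    have hcN : c ((N : ℝ) * h) = ψ qv := by
      rw [hNh, hc]
      simp only [one_smul]
      congr 1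
      rw [hw]; abel
    have := tot N
    rw [hu] at this
    simp only [Nat.cast_zero, zero_mul, hc0, hcN] at this
    have harith : (N : ℝ) * ((N : ℝ) - 1) * (h * L) ^ 2 = L ^ 2 - L ^ 2 / N := by
      rw [hh]
      field_simp
    rw [harith] at this
    linarith
  rw [hLd]
  apply le_of_forall_pos_le_add'
  intro ε hε
  obtain ⟨N, hN⟩ := exists_nat_gt (L ^ 2 / ε)
  have hN0 : 0 < N := by
    by_contra hc
    push_neg at hc
    interval_cases N
    have h0 : (0:ℝ) ≤ L ^ 2 / ε := by positivity
    simp at hN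
    linarith
  have h1 := key N hN0
  have hNpos : (0 : ℝ) < N := by exact_mod_cast hN0
  have h2 : L ^ 2 / N ≤ ε := by
    rw [div_le_iff₀ hNpos]
    have h3 := (div_lt_iff₀ hε).mp hN
    nlinarith
  linarith

end Proj
section MidAff

variable {n : ℕ}

local notation "V" => EuclideanSpace ℝ (Fin n)

theorem mconstR {q : ℝ → ℝ} (hq : ∀ s t : ℝ, q ((s + t) / 2) ≤ (q s + q t) / 2) {M : ℝ}
    (hM : ∀ t, |q t| ≤ M) : ∀ s t, q s = q t := by
  have main : ∀ s t : ℝ, q t ≤ q s := by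
    intro s t
    set r : ℕ → ℝ := fun k => q (s + (k : ℝ) * (t - s)) with hr
    have rec' : ∀ k : ℕ, 2 * r (k + 1) - r k ≤ r (k + 2) := by
      intro k
      have h := hq (s + (k : ℝ) * (t - s)) (s + ((k : ℝ) + 2) * (t - s))
      have e : (s + (k : ℝ) * (t - s) + (s + ((k : ℝ) + 2) * (t - s))) / 2
          = s + ((k : ℝ) + 1) * (t - s) := by ring
      rw [e] at h
      have e1 : ((k + 1 : ℕ) : ℝ) = (k : ℝ) + 1 := by push_cast; ring
      have e2 : ((k + 2 : ℕ) : ℝ) = (k : ℝ) + 2 := by push_cast; ring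
      rw [hr]
      simp only [e1, e2]
      linarith
    have gap : ∀ k : ℕ, r 1 - r 0 ≤ r (k + 1) - r k := by
      intro k
      induction k with
      | zero => simp
      | succ m ih => have := rec' m; linarith
    have lin : ∀ k : ℕ, r 0 + (k : ℝ) * (r 1 - r 0) ≤ r k := by
      intro k
      induction k with
      | zero => simp
      | succ m ih =>
        have := gap m
        push_cast
        push_cast at ih
        linarith
    have hd : r 1 - r 0 ≤ 0 := by
      by_contra hc
      push_neg at hc
      obtain ⟨k, hk⟩ := exists_nat_gt ((2 * M) / (r 1 - r 0))
      have hk2 := lin k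
      have h1 := hM (s + (k : ℝ) * (t - s))
      have h2 := hM s
      have hr0 : r 0 = q s := by rw [hr]; simp
      have h3 := (div_lt_iff₀ hc).mp hk
      rw [abs_le] at h1 h2
      have hrk : r k = q (s + (k : ℝ) * (t - s)) := rfl
      nlinarith [h1.1, h1.2, h2.1, h2.2]
    have hr0 : r 0 = q s := by rw [hr]; simp
    have hr1 : r 1 = q t := by rw [hr]; norm_num
    linarith
  intro s t
  exact le_antisymm (main t s) (main s t)

theorem mconstV {q : V → ℝ}
    (hq : ∀ u v, q ((2⁻¹ : ℝ) • (u + v)) ≤ (q u + q v) / 2) {M : ℝ}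
    (hM : ∀ v, |q v| ≤ M) : ∀ u v, q u = q v := by
  intro u v
  set p : ℝ → ℝ := fun r => q (u + r • (v - u)) with hp
  have hpq : ∀ s t : ℝ, p ((s + t) / 2) ≤ (p s + p t) / 2 := by
    intro s t
    have e : (2⁻¹ : ℝ) • ((u + s • (v - u)) + (u + t • (v - u)))
        = u + ((s + t) / 2) • (v - u) := by
      rw [div_eq_inv_mul, mul_smul]
      module
    have h := hq (u + s • (v - u)) (u + t • (v - u))
    rw [e] at h
    exact h
  have := mconstR hpq (M := M) (fun t => hM _) 0 1
  have h0 : p 0 = q u := by rw [hp]; simp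
  have h1 : p 1 = q v := by rw [hp]; simp
  rw [h0, h1] at this
  exact this

theorem midaff_add {T : V → V}
    (hmid : ∀ u v, T ((2⁻¹ : ℝ) • (u + v)) = (2⁻¹ : ℝ) • (T u + T v)) :
    ∀ u v, T u + T v = T (u + v) + T 0 := by
  intro u v
  have h1 := hmid u v
  have h2 := hmid (u + v) 0
  rw [add_zero] at h2
  rw [h2] at h1
  have h3 := congrArg (fun w : V => (2 : ℝ) • w) h1
  simp only [smul_smul] at h3
  norm_num at h3
  exact h3.symm

theorem midaff_nsmul {T : V → V}
    (hmid : ∀ u v, T ((2⁻¹ : ℝ) • (u + v)) = (2⁻¹ : ℝ) • (T u + T v)) :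
    ∀ (k : ℕ) (v : V), T ((k : ℝ) • v) = (k : ℝ) • (T v - T 0) + T 0 := by
  intro k v
  induction k with
  | zero => simp
  | succ m ih =>
    have hadd := midaff_add hmid ((m : ℝ) • v) v
    have e : (m : ℝ) • v + v = ((m + 1 : ℕ) : ℝ) • v := by push_cast; module
    rw [e] at hadd
    have h5 : T (((m + 1 : ℕ) : ℝ) • v) = T ((m : ℝ) • v) + T v - T 0 := by
      rw [eq_sub_iff_add_eq]
      exact hadd.symm
    rw [h5, ih]
    push_cast
    module

theorem midaff_sub {T : V → V}
    (hmid : ∀ u v, T ((2⁻¹ : ℝ) • (u + v)) = (2⁻¹ : ℝ) • (T u + T v)) :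
    ∀ u v, T u - T v = T (u - v) - T 0 := by
  intro u v
  have h := midaff_add hmid (u - v) v
  rw [sub_add_cancel] at h
  have h5 : T u = T (u - v) + T v - T 0 := by
    rw [eq_sub_iff_add_eq]
    exact h.symm
  rw [h5]
  abel

theorem midaff_nonexp {T : V → V}
    (hmid : ∀ u v, T ((2⁻¹ : ℝ) • (u + v)) = (2⁻¹ : ℝ) • (T u + T v)) {K : ℝ}
    (hb : ∀ u v, ‖T u - T v‖ ≤ ‖u - v‖ + K) : ∀ u v, ‖T u - T v‖ ≤ ‖u - v‖ := by
  have base : ∀ v : V, ‖T v - T 0‖ ≤ ‖v‖ := by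
    intro v
    apply le_of_forall_pos_le_add'
    intro ε hε
    obtain ⟨k, hk⟩ := exists_nat_gt (max (K / ε) 1)
    have hk1 : (1 : ℝ) ≤ k := le_trans (le_max_right _ _) hk.le
    have hkpos : (0 : ℝ) < k := by linarith
    have h1 := hb ((k : ℝ) • v) 0
    rw [midaff_nsmul hmid k v] at h1
    have e1 : (k : ℝ) • (T v - T 0) + T 0 - T 0 = (k : ℝ) • (T v - T 0) := by module
    rw [e1, norm_smul, sub_zero, norm_smul] at h1
    simp only [Real.norm_eq_abs, abs_of_pos hkpos] at h1
    have h3 : K ≤ ε * k := by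
      have := (div_lt_iff₀ hε).mp (lt_of_le_of_lt (le_max_left _ _) hk)
      linarith
    have h4 : (k : ℝ) * ‖T v - T 0‖ ≤ (k : ℝ) * (‖v‖ + ε) := by nlinarith
    exact le_of_mul_le_mul_left h4 hkpos
  intro u v
  have h := midaff_sub hmid u v
  rw [h]
  exact base (u - v)

theorem midaff_translate {T : V → V}
    (hmid : ∀ u v, T ((2⁻¹ : ℝ) • (u + v)) = (2⁻¹ : ℝ) • (T u + T v)) {ρ : ℝ}
    (hd : ∀ v, ‖T v - v‖ = ρ) : ∀ v, T v = v + T 0 := by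
  suffices h : ∀ v, T v - T 0 - v = 0 by
    intro v
    have h6 := h v
    have : T v = T v - T 0 - v + (v + T 0) := by abel
    rw [this, h6, zero_add]
  intro v
  by_contra hc
  have hpos : 0 < ‖T v - T 0 - v‖ := by
    rw [norm_pos_iff]
    exact hc
  have hρ : 0 ≤ ρ := hd 0 ▸ norm_nonneg _
  obtain ⟨k, hk⟩ := exists_nat_gt ((ρ + ‖T 0‖) / ‖T v - T 0 - v‖)
  have hkpos : (0 : ℝ) < k :=
    lt_of_le_of_lt (div_nonneg (by linarith [norm_nonneg (T 0)]) hpos.le) hk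
  have h1 := hd ((k : ℝ) • v)
  rw [midaff_nsmul hmid k v] at h1
  have e : (k : ℝ) • (T v - T 0) + T 0 - (k : ℝ) • v = (k : ℝ) • (T v - T 0 - v) + T 0 := by
    module
  rw [e] at h1
  have h4 : ‖(k : ℝ) • (T v - T 0 - v)‖ = (k : ℝ) * ‖T v - T 0 - v‖ := by
    rw [norm_smul]
    simp [abs_of_pos hkpos]
  have h2 : (k : ℝ) * ‖T v - T 0 - v‖ ≤ ρ + ‖T 0‖ := by
    have ht : ‖(k : ℝ) • (T v - T 0 - v)‖ ≤ ‖(k : ℝ) • (T v - T 0 - v) + T 0‖ + ‖T 0‖ := by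
      have h7 := norm_sub_le ((k : ℝ) • (T v - T 0 - v) + T 0) (T 0)
      rwa [add_sub_cancel_right] at h7
    rw [h1, h4] at ht
    exact ht
  have h5 := (div_lt_iff₀ hpos).mp hk
  linarith

end MidAff
section Pair

variable {n : ℕ} {X : Type*} [MetricSpace X]

local notation "V" => EuclideanSpace ℝ (Fin n)

theorem par_consts_eq (hX : IsCAT0 X) {ψ ψ' : V → X} (hψ : Isometry ψ) (hψ' : Isometry ψ')
    {c c' : ℝ}
    (hCD : ∀ a ∈ Set.range ψ, Metric.infDist a (Set.range ψ') = c)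
    (hDC : ∀ b ∈ Set.range ψ', Metric.infDist b (Set.range ψ) = c') : c' = c := by
  have key : ∀ (τ τ' : V → X), Isometry τ → Isometry τ' →
      ∀ {d d' : ℝ}, (∀ a ∈ Set.range τ, Metric.infDist a (Set.range τ') = d) →
      (∀ b ∈ Set.range τ', Metric.infDist b (Set.range τ) = d') → d' ≤ d := by
    intro τ τ' hτ hτ' d d' h1 h2
    set a := τ 0 with ha
    have hp := pro_flat hX hτ' a
    have hda : dist a (pro (Set.range τ') a) = d := by
      rw [← infDist_isProj hp]
      exact h1 a ⟨0, rfl⟩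
    have h3 := h2 _ hp.1
    have h4 : Metric.infDist (pro (Set.range τ') a) (Set.range τ) ≤ d := by
      rw [← hda, dist_comm]
      exact Metric.infDist_le_dist_of_mem ⟨0, rfl⟩
    rw [h3] at h4
    exact h4
  exact le_antisymm (key ψ ψ' hψ hψ' hCD hDC) (key ψ' ψ hψ' hψ hDC hCD)

theorem pp_dist_pro (hX : IsCAT0 X) {ψ ψ' : V → X} (hψ' : Isometry ψ') {c : ℝ}
    (hCD : ∀ a ∈ Set.range ψ, Metric.infDist a (Set.range ψ') = c)
    {a : X} (ha : a ∈ Set.range ψ) :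
    dist a (pro (Set.range ψ') a) = c := by
  rw [← infDist_isProj (pro_flat hX hψ' a)]
  exact hCD a ha

theorem pp_mutual (hX : IsCAT0 X) {ψ ψ' : V → X} (hψ : Isometry ψ) (hψ' : Isometry ψ') {c : ℝ}
    (hCD : ∀ a ∈ Set.range ψ, Metric.infDist a (Set.range ψ') = c)
    (hDC : ∀ b ∈ Set.range ψ', Metric.infDist b (Set.range ψ) = c)
    {a : X} (ha : a ∈ Set.range ψ) :
    pro (Set.range ψ) (pro (Set.range ψ') a) = a := by
  set p := pro (Set.range ψ') a with hp
  have hpj := pro_flat hX hψ' a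
  have hqj := pro_flat hX hψ p
  have hvar := varIneq hX hψ hqj ha
  have h1 : dist a p = c := pp_dist_pro hX hψ' hCD ha
  have h2 : dist p (pro (Set.range ψ) p) = c := by
    rw [← infDist_isProj hqj]
    exact hDC p hpj.1
  rw [dist_comm p a, h1, h2] at hvar
  have h3 : dist (pro (Set.range ψ) p) a = 0 := by
    nlinarith [dist_nonneg (x := pro (Set.range ψ) p) (y := a)]
  exact dist_eq_zero.mp h3

theorem flat_mpt_eq (hX : IsCAT0 X) {ψ : V → X} (hψ : Isometry ψ) {u v : V} :
    mpt hX (ψ u) (ψ v) = ψ ((2⁻¹ : ℝ) • (u + v)) :=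
  mpt_eq hX (flat_mid hψ u v)

theorem flat_mpt_mem (hX : IsCAT0 X) {ψ : V → X} (hψ : Isometry ψ) {a b : X}
    (ha : a ∈ Set.range ψ) (hb : b ∈ Set.range ψ) :
    mpt hX a b ∈ Set.range ψ := by
  obtain ⟨u, rfl⟩ := ha
  obtain ⟨v, rfl⟩ := hb
  rw [flat_mpt_eq hX hψ]
  exact ⟨_, rfl⟩

theorem pp_pro_mid (hX : IsCAT0 X) {ψ ψ' : V → X} (hψ : Isometry ψ) (hψ' : Isometry ψ')
    {c : ℝ}
    (hCD : ∀ a ∈ Set.range ψ, Metric.infDist a (Set.range ψ') = c)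
    {a b : X} (ha : a ∈ Set.range ψ) (hb : b ∈ Set.range ψ) :
    pro (Set.range ψ') (mpt hX a b)
      = mpt hX (pro (Set.range ψ') a) (pro (Set.range ψ') b) := by
  set m := mpt hX a b with hm
  set m' := mpt hX (pro (Set.range ψ') a) (pro (Set.range ψ') b) with hm'
  have hmC : m ∈ Set.range ψ := flat_mpt_mem hX hψ ha hb
  have hm'D : m' ∈ Set.range ψ' :=
    flat_mpt_mem hX hψ' (pro_flat hX hψ' a).1 (pro_flat hX hψ' b).1
  have hbus := busemann hX (mpt_spec hX a b)
    (mpt_spec hX (pro (Set.range ψ') a) (pro (Set.range ψ') b))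
  rw [pp_dist_pro hX hψ' hCD ha, pp_dist_pro hX hψ' hCD hb] at hbus
  have hle : dist m m' ≤ c := by rw [hm, hm']; linarith
  have hproj : IsProj (Set.range ψ') m m' := by
    refine ⟨hm'D, fun q hq => ?_⟩
    have : c ≤ dist m q := by
      rw [← hCD m hmC]
      exact Metric.infDist_le_dist_of_mem hq
    linarith
  exact proj_uniq hX hψ' (pro_flat hX hψ' m) hproj

theorem pp_pro_dist_le (hX : IsCAT0 X) {ψ ψ' : V → X} (hψ : Isometry ψ) (hψ' : Isometry ψ')
    {c : ℝ}
    (hCD : ∀ a ∈ Set.range ψ, Metric.infDist a (Set.range ψ') = c)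
    {a b : X} (ha : a ∈ Set.range ψ) (hb : b ∈ Set.range ψ) :
    dist (pro (Set.range ψ') a) (pro (Set.range ψ') b) ≤ dist a b := by
  have hch : ∀ w : V, ∃ u : V, ψ' u = pro (Set.range ψ') (ψ w) := fun w =>
    (pro_flat hX hψ' (ψ w)).1
  set T : V → V := fun w => (hch w).choose with hT
  have hTs : ∀ w, ψ' (T w) = pro (Set.range ψ') (ψ w) := fun w => (hch w).choose_spec
  have hmid : ∀ u v : V, T ((2⁻¹ : ℝ) • (u + v)) = (2⁻¹ : ℝ) • (T u + T v) := by
    intro u v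
    apply hψ'.injective
    rw [hTs]
    have e1 : ψ ((2⁻¹ : ℝ) • (u + v)) = mpt hX (ψ u) (ψ v) := (flat_mpt_eq hX hψ).symm
    rw [e1, pp_pro_mid hX hψ hψ' hCD ⟨u, rfl⟩ ⟨v, rfl⟩, ← hTs, ← hTs,
      flat_mpt_eq hX hψ']
  have hbnd : ∀ u v : V, ‖T u - T v‖ ≤ ‖u - v‖ + 2 * c := by
    intro u v
    have e2 : ‖T u - T v‖ = dist (pro (Set.range ψ') (ψ u)) (pro (Set.range ψ') (ψ v)) := by
      rw [← hTs, ← hTs, vdist hψ']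
    rw [e2]
    have t1 := dist_triangle (pro (Set.range ψ') (ψ u)) (ψ u) (pro (Set.range ψ') (ψ v))
    have t2 := dist_triangle (ψ u) (ψ v) (pro (Set.range ψ') (ψ v))
    have d1 : dist (ψ u) (pro (Set.range ψ') (ψ u)) = c := pp_dist_pro hX hψ' hCD ⟨u, rfl⟩
    have d2 : dist (ψ v) (pro (Set.range ψ') (ψ v)) = c := pp_dist_pro hX hψ' hCD ⟨v, rfl⟩
    have e3 : dist (ψ u) (ψ v) = ‖u - v‖ := vdist hψ u v
    rw [dist_comm (pro (Set.range ψ') (ψ u)) (ψ u)] at t1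
    linarith
  have hne := midaff_nonexp hmid hbnd
  obtain ⟨u, rfl⟩ := ha
  obtain ⟨v, rfl⟩ := hb
  rw [← hTs, ← hTs, vdist hψ', vdist hψ]
  exact hne u v

theorem pp_pro_dist_eq (hX : IsCAT0 X) {ψ ψ' : V → X} (hψ : Isometry ψ) (hψ' : Isometry ψ')
    {c : ℝ}
    (hCD : ∀ a ∈ Set.range ψ, Metric.infDist a (Set.range ψ') = c)
    (hDC : ∀ b ∈ Set.range ψ', Metric.infDist b (Set.range ψ) = c)
    {a b : X} (ha : a ∈ Set.range ψ) (hb : b ∈ Set.range ψ) :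
    dist (pro (Set.range ψ') a) (pro (Set.range ψ') b) = dist a b := by
  refine le_antisymm (pp_pro_dist_le hX hψ hψ' hCD ha hb) ?_
  have h1 := pp_pro_dist_le hX hψ' hψ hDC (pro_flat hX hψ' a).1 (pro_flat hX hψ' b).1
  rw [pp_mutual hX hψ hψ' hCD hDC ha, pp_mutual hX hψ hψ' hCD hDC hb] at h1
  exact h1

theorem pp_pyth (hX : IsCAT0 X) {ψ ψ' : V → X} (hψ : Isometry ψ) (hψ' : Isometry ψ')
    {c : ℝ}
    (hCD : ∀ a ∈ Set.range ψ, Metric.infDist a (Set.range ψ') = c)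
    (hDC : ∀ b ∈ Set.range ψ', Metric.infDist b (Set.range ψ) = c)
    {a q : X} (ha : a ∈ Set.range ψ) (hq : q ∈ Set.range ψ') :
    dist a q ^ 2 = c ^ 2 + dist (pro (Set.range ψ') a) q ^ 2 := by
  set e' := pro (Set.range ψ) q with he'
  set u := pro (Set.range ψ') a with hu
  have he'C : e' ∈ Set.range ψ := (pro_flat hX hψ q).1
  have huD : u ∈ Set.range ψ' := (pro_flat hX hψ' a).1
  have hqe' : pro (Set.range ψ') e' = q := pp_mutual hX hψ' hψ hDC hCD hq
  have hfour := four hX (mpt_spec hX a q) (mpt_spec hX e' u)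
  have hqu : dist q u = dist a e' := by
    rw [← hqe', hu, pp_pro_dist_eq hX hψ hψ' hCD hDC he'C ha, dist_comm]
  have hau : dist a u = c := pp_dist_pro hX hψ' hCD ha
  have he'q : dist e' q = c := by
    rw [dist_comm, he', ← infDist_isProj (pro_flat hX hψ q)]
    exact hDC q hq
  have huq : dist u q = dist a e' := by rw [dist_comm]; exact hqu
  have hvar2' : c ^ 2 + dist a e' ^ 2 ≤ dist e' u ^ 2 := by
    have hv := varIneq hX hψ' (pro_flat hX hψ' e') huD
    rw [hqe', he'q, hqu] at hv
    exact hv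
  have hvar1' : c ^ 2 + dist a e' ^ 2 ≤ dist a q ^ 2 := by
    have hv := varIneq hX hψ' (pro_flat hX hψ' a) hq
    rw [← hu, hau, huq] at hv
    exact hv
  have h0 : (0 : ℝ) ≤ dist (mpt hX a q) (mpt hX e' u) ^ 2 := sq_nonneg _
  rw [hqu, hau, he'q] at hfour
  rw [huq]
  linarith [hfour, hvar1', hvar2', h0]

end Pair
section AFlatSec

variable {n : ℕ} {X : Type*} [MetricSpace X]

local notation "V" => EuclideanSpace ℝ (Fin n)

/-- An `E`-aligned parallel flat. -/
structure AFlat (n : ℕ) (X : Type*) [MetricSpace X] (φ : EuclideanSpace ℝ (Fin n) → X) where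
  f : EuclideanSpace ℝ (Fin n) → X
  iso : Isometry f
  c : ℝ
  cnn : 0 ≤ c
  pyth : ∀ v s, dist (f v) (φ s) ^ 2 = c ^ 2 + ‖v - s‖ ^ 2

variable {φ : EuclideanSpace ℝ (Fin n) → X}

theorem AFlat.dist_base (A : AFlat n X φ) (v : V) : dist (A.f v) (φ v) = A.c := by
  have h := A.pyth v v
  simp at h
  exact eq_of_sq_eq dist_nonneg A.cnn h

theorem AFlat.dist_ge (A : AFlat n X φ) (v s : V) : A.c ≤ dist (A.f v) (φ s) := by
  apply le_of_sq_le_sq A.cnn dist_nonneg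
  rw [A.pyth v s]
  nlinarith [sq_nonneg ‖v - s‖]

theorem AFlat.dist_ge' (A : AFlat n X φ) (v s : V) : ‖v - s‖ ≤ dist (A.f v) (φ s) := by
  apply le_of_sq_le_sq (norm_nonneg _) dist_nonneg
  rw [A.pyth v s]
  nlinarith [sq_nonneg A.c]

theorem AFlat.infDistE (A : AFlat n X φ) (v : V) :
    Metric.infDist (A.f v) (Set.range φ) = A.c := by
  refine le_antisymm ?_ ?_
  · rw [← A.dist_base v]
    exact Metric.infDist_le_dist_of_mem ⟨v, rfl⟩
  · rw [Metric.infDist_eq_iInf]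
    haveI : Nonempty (Set.range φ) := ⟨⟨φ 0, 0, rfl⟩⟩
    refine le_ciInf fun e => ?_
    obtain ⟨s, hs⟩ := e.2
    have h2 := A.dist_ge v s
    rw [hs] at h2
    exact h2

theorem AFlat.infDistF (A : AFlat n X φ) (s : V) :
    Metric.infDist (φ s) (Set.range A.f) = A.c := by
  refine le_antisymm ?_ ?_
  · rw [← A.dist_base s, dist_comm]
    exact Metric.infDist_le_dist_of_mem ⟨s, rfl⟩
  · rw [Metric.infDist_eq_iInf]
    haveI : Nonempty (Set.range A.f) := ⟨⟨A.f 0, 0, rfl⟩⟩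
    refine le_ciInf fun e => ?_
    obtain ⟨v, hv⟩ := e.2
    have h2 := A.dist_ge v s
    rw [dist_comm, hv] at h2
    exact h2

/-- The base flat `E` as an aligned flat. -/
def EFlat (hφ : Isometry φ) : AFlat n X φ where
  f := φ
  iso := hφ
  c := 0
  cnn := le_refl 0
  pyth := fun v s => by rw [vdist hφ]; ring

theorem EFlat_f (hφ : Isometry φ) : (EFlat hφ).f = φ := rfl

theorem EFlat_c (hφ : Isometry φ) : (EFlat hφ).c = 0 := rfl

/-- Any flat parallel to `E` can be realigned into an `AFlat` with the same range. -/
theorem mkAFlat (hX : IsCAT0 X) (hφ : Isometry φ) {ψ : V → X} (hψ : Isometry ψ)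
    {c1 c2 : ℝ}
    (hFE : ∀ a ∈ Set.range ψ, Metric.infDist a (Set.range φ) = c1)
    (hEF : ∀ b ∈ Set.range φ, Metric.infDist b (Set.range ψ) = c2) :
    ∃ A : AFlat n X φ, Set.range A.f = Set.range ψ := by
  have hc : c1 = c2 := par_consts_eq hX hφ hψ hEF hFE
  subst hc
  set f : V → X := fun s => pro (Set.range ψ) (φ s) with hf
  have hmemf : ∀ s, f s ∈ Set.range ψ := fun s => (pro_flat hX hψ (φ s)).1
  have hde : ∀ s v : V, dist (f s) (f v) = ‖s - v‖ := by
    intro s v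
    rw [hf]
    simp only
    rw [pp_pro_dist_eq hX hφ hψ hEF hFE ⟨s, rfl⟩ ⟨v, rfl⟩, vdist hφ]
  have hiso : Isometry f := Isometry.of_dist_eq (by intro a b; rw [hde, dist_eq_norm])
  have hpyth : ∀ v s, dist (f v) (φ s) ^ 2 = c1 ^ 2 + ‖v - s‖ ^ 2 := by
    intro v s
    have h := pp_pyth hX hφ hψ hEF hFE (a := φ s) (q := f v) ⟨s, rfl⟩ (hmemf v)
    rw [dist_comm (φ s) (f v)] at h
    rw [h]
    have : dist (pro (Set.range ψ) (φ s)) (f v) = ‖s - v‖ := hde s v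
    rw [this, norm_sub_rev]
  have hcnn : 0 ≤ c1 := by
    rw [← hFE (ψ 0) ⟨0, rfl⟩]
    exact Metric.infDist_nonneg
  refine ⟨⟨f, hiso, c1, hcnn, hpyth⟩, ?_⟩
  apply Set.eq_of_subset_of_subset
  · rintro y ⟨s, rfl⟩
    exact hmemf s
  · rintro y hy
    have hm := pp_mutual hX hψ hφ hFE hEF hy
    obtain ⟨s, hs⟩ := (pro_flat hX hφ y).1
    refine ⟨s, ?_⟩
    show f s = y
    rw [hf]
    simp only
    rw [hs, hm]

end AFlatSec
section TwoFlat

variable {n : ℕ} {X : Type*} [MetricSpace X]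

local notation "V" => EuclideanSpace ℝ (Fin n)

variable {φ : EuclideanSpace ℝ (Fin n) → X}

theorem aflat_dist_bound (A B : AFlat n X φ) (v : V) :
    dist (A.f v) (B.f v) ≤ A.c + B.c := by
  have t := dist_triangle (A.f v) (φ v) (B.f v)
  have h1 := A.dist_base v
  have h2 := B.dist_base v
  rw [dist_comm] at h2
  linarith

theorem aflat_infDist_const (hX : IsCAT0 X) (A B : AFlat n X φ) (v : V) :
    Metric.infDist (A.f v) (Set.range B.f) = Metric.infDist (A.f 0) (Set.range B.f) := by
  set q : V → ℝ := fun v => Metric.infDist (A.f v) (Set.range B.f) with hqd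
  have hq : ∀ u v : V, q ((2⁻¹ : ℝ) • (u + v)) ≤ (q u + q v) / 2 := by
    intro u v
    have hpu := pro_flat hX B.iso (A.f u)
    have hpv := pro_flat hX B.iso (A.f v)
    have hmA : A.f ((2⁻¹ : ℝ) • (u + v)) = mpt hX (A.f u) (A.f v) :=
      (flat_mpt_eq hX A.iso).symm
    have hm' : mpt hX (pro (Set.range B.f) (A.f u)) (pro (Set.range B.f) (A.f v))
        ∈ Set.range B.f := flat_mpt_mem hX B.iso hpu.1 hpv.1
    have hbus := busemann hX (mpt_spec hX (A.f u) (A.f v))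
      (mpt_spec hX (pro (Set.range B.f) (A.f u)) (pro (Set.range B.f) (A.f v)))
    have hle : q ((2⁻¹ : ℝ) • (u + v)) ≤ dist (mpt hX (A.f u) (A.f v))
        (mpt hX (pro (Set.range B.f) (A.f u)) (pro (Set.range B.f) (A.f v))) := by
      rw [hqd]
      simp only
      rw [hmA]
      exact Metric.infDist_le_dist_of_mem hm'
    have e1 : q u = dist (A.f u) (pro (Set.range B.f) (A.f u)) := infDist_isProj hpu
    have e2 : q v = dist (A.f v) (pro (Set.range B.f) (A.f v)) := infDist_isProj hpv
    rw [e1, e2]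
    linarith
  have hM : ∀ v : V, |q v| ≤ A.c + B.c := by
    intro v
    rw [abs_le]
    constructor
    · have := Metric.infDist_nonneg (x := A.f v) (s := Set.range B.f)
      have hc := A.cnn
      have hc2 := B.cnn
      rw [hqd]
      simp only
      linarith
    · rw [hqd]
      simp only
      have h1 : Metric.infDist (A.f v) (Set.range B.f) ≤ dist (A.f v) (B.f v) :=
        Metric.infDist_le_dist_of_mem ⟨v, rfl⟩
      have h2 := aflat_dist_bound A B v
      linarith
  exact mconstV hq hM v 0

theorem aflat_diag_const (hX : IsCAT0 X) (A B : AFlat n X φ) (v : V) :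
    dist (A.f v) (B.f v) = dist (A.f 0) (B.f 0) := by
  set q : V → ℝ := fun v => dist (A.f v) (B.f v) with hqd
  have hq : ∀ u v : V, q ((2⁻¹ : ℝ) • (u + v)) ≤ (q u + q v) / 2 := by
    intro u v
    have hmA : A.f ((2⁻¹ : ℝ) • (u + v)) = mpt hX (A.f u) (A.f v) :=
      (flat_mpt_eq hX A.iso).symm
    have hmB : B.f ((2⁻¹ : ℝ) • (u + v)) = mpt hX (B.f u) (B.f v) :=
      (flat_mpt_eq hX B.iso).symm
    have hbus := busemann hX (mpt_spec hX (A.f u) (A.f v)) (mpt_spec hX (B.f u) (B.f v))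
    rw [hqd]
    simp only
    rw [hmA, hmB]
    linarith
  have hM : ∀ v : V, |q v| ≤ A.c + B.c := by
    intro v
    rw [abs_le]
    have h2 := aflat_dist_bound A B v
    have := dist_nonneg (x := A.f v) (y := B.f v)
    have hc := A.cnn
    have hc2 := B.cnn
    constructor <;> (rw [hqd]; simp only; linarith)
  exact mconstV hq hM v 0

theorem aflat_far (A B : AFlat n X φ) (v u : V) : ‖v - u‖ ≤ dist (A.f v) (B.f u) := by
  by_cases hvu : v = u
  · subst hvu
    simpa using dist_nonneg
  have hr : 0 < ‖v - u‖ := by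
    rw [norm_pos_iff, sub_ne_zero]
    exact hvu
  set r := ‖v - u‖ with hrd
  apply le_of_forall_pos_le_add'
  intro ε hε
  set T : ℝ := max 1 (B.c ^ 2 / (2 * ε)) with hTd
  have hT1 : (1 : ℝ) ≤ T := le_max_left _ _
  have hT0 : (0 : ℝ) < T := by linarith
  set w : V := u + (T / r) • (u - v) with hwd
  have hvw : ‖v - w‖ = r + T := by
    have e : v - w = (1 + T / r) • (v - u) := by
      rw [hwd]
      module
    rw [e, norm_smul]
    have hpos : (0 : ℝ) < 1 + T / r := by positivity
    rw [Real.norm_eq_abs, abs_of_pos hpos, ← hrd]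
    field_simp
  have huw : ‖u - w‖ = T := by
    have e : u - w = -((T / r) • (u - v)) := by rw [hwd]; abel
    rw [e, norm_neg, norm_smul]
    have : ‖u - v‖ = r := by rw [norm_sub_rev, ← hrd]
    rw [Real.norm_eq_abs, abs_of_pos (by positivity), this]
    field_simp
  have d1 : r + T ≤ dist (A.f v) (φ w) := by
    apply le_of_sq_le_sq (by positivity) dist_nonneg
    rw [A.pyth v w, hvw]
    nlinarith [sq_nonneg A.c]
  have d2 : dist (φ w) (B.f u) ≤ T + B.c ^ 2 / (2 * T) := by
    apply le_of_sq_le_sq dist_nonneg (by positivity)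
    have h4 : (0:ℝ) ≤ (B.c ^ 2 / (2 * T))^2 := sq_nonneg _
    have e : (T + B.c ^ 2 / (2 * T)) ^ 2 = T ^ 2 + B.c ^ 2 + (B.c ^ 2 / (2 * T)) ^ 2 := by
      field_simp
      ring
    rw [dist_comm, B.pyth u w, huw, e]
    linarith
  have ht := dist_triangle (A.f v) (B.f u) (φ w)
  rw [dist_comm (B.f u) (φ w)] at ht
  have hTε : B.c ^ 2 / (2 * T) ≤ ε := by
    have h5 : B.c ^ 2 / (2 * ε) ≤ T := le_max_right _ _
    rw [div_le_iff₀ (by positivity)]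
    rw [div_le_iff₀ (by positivity)] at h5
    nlinarith
  linarith

theorem twoflat (hX : IsCAT0 X) (A B : AFlat n X φ) (v u : V) :
    dist (A.f v) (B.f u) ^ 2 = dist (A.f 0) (B.f 0) ^ 2 + ‖v - u‖ ^ 2 := by
  -- the two flats are mutually parallel
  set b : ℝ := Metric.infDist (A.f 0) (Set.range B.f) with hbd
  have hAB : ∀ a ∈ Set.range A.f, Metric.infDist a (Set.range B.f) = b := by
    rintro a ⟨w, rfl⟩
    exact aflat_infDist_const hX A B w
  obtain hBA' : ∀ a ∈ Set.range B.f, Metric.infDist a (Set.range A.f)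
      = Metric.infDist (B.f 0) (Set.range A.f) := by
    rintro a ⟨w, rfl⟩
    exact aflat_infDist_const hX B A w
  have hbb : Metric.infDist (B.f 0) (Set.range A.f) = b :=
    par_consts_eq hX A.iso B.iso hAB hBA'
  rw [hbb] at hBA'
  have hBA := hBA'
  -- the projection map in coordinates
  have hch : ∀ w : V, ∃ u' : V, B.f u' = pro (Set.range B.f) (A.f w) := fun w =>
    (pro_flat hX B.iso (A.f w)).1
  set T : V → V := fun w => (hch w).choose with hTd
  have hTs : ∀ w, B.f (T w) = pro (Set.range B.f) (A.f w) := fun w => (hch w).choose_spec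
  have hmidT : ∀ w w' : V, T ((2⁻¹ : ℝ) • (w + w')) = (2⁻¹ : ℝ) • (T w + T w') := by
    intro w w'
    apply B.iso.injective
    rw [hTs]
    have e1 : A.f ((2⁻¹ : ℝ) • (w + w')) = mpt hX (A.f w) (A.f w') :=
      (flat_mpt_eq hX A.iso).symm
    rw [e1, pp_pro_mid hX A.iso B.iso hAB ⟨w, rfl⟩ ⟨w', rfl⟩, ← hTs, ← hTs,
      flat_mpt_eq hX B.iso]
  have hβ := aflat_diag_const hX A B
  have hpyw : ∀ w : V, dist (A.f w) (B.f w) ^ 2 = b ^ 2 + ‖T w - w‖ ^ 2 := by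
    intro w
    have h := pp_pyth hX A.iso B.iso hAB hBA (a := A.f w) (q := B.f w) ⟨w, rfl⟩ ⟨w, rfl⟩
    rw [← hTs, vdist B.iso] at h
    exact h
  have hdisp : ∀ w : V, ‖T w - w‖ = ‖T 0 - 0‖ := by
    intro w
    apply eq_of_sq_eq (norm_nonneg _) (norm_nonneg _)
    have h1 := hpyw w
    have h2 := hpyw 0
    rw [hβ w] at h1
    linarith
  have htr := midaff_translate hmidT hdisp
  have key : ∀ v u : V, dist (A.f v) (B.f u) ^ 2 = b ^ 2 + ‖v + T 0 - u‖ ^ 2 := by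
    intro v u
    have h := pp_pyth hX A.iso B.iso hAB hBA (a := A.f v) (q := B.f u) ⟨v, rfl⟩ ⟨u, rfl⟩
    rw [← hTs, vdist B.iso, htr v] at h
    exact h
  have ht0 : T 0 = 0 := by
    by_contra hc
    have hpos : 0 < ‖T 0‖ := by rwa [norm_pos_iff]
    obtain ⟨k, hk⟩ := exists_nat_gt ((b ^ 2 + ‖T 0‖ ^ 2) / (2 * ‖T 0‖ ^ 2))
    have hkey := key 0 ((k : ℝ) • T 0)
    have hkpos : (0 : ℝ) < k := by
      refine lt_of_le_of_lt ?_ hk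
      positivity
    have e1 : ‖(0 : V) - (k : ℝ) • T 0‖ = (k : ℝ) * ‖T 0‖ := by
      rw [zero_sub, norm_neg, norm_smul, Real.norm_eq_abs, abs_of_pos hkpos]
    have e2 : ‖(0 : V) + T 0 - (k : ℝ) • T 0‖ ^ 2 = ((k : ℝ) - 1) ^ 2 * ‖T 0‖ ^ 2 := by
      have e : (0 : V) + T 0 - (k : ℝ) • T 0 = -(((k : ℝ) - 1) • T 0) := by module
      rw [e, norm_neg, norm_smul, Real.norm_eq_abs]
      rw [mul_pow, sq_abs]
    have hfar := aflat_far A B 0 ((k : ℝ) • T 0)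
    rw [e1] at hfar
    have hsq : ((k : ℝ) * ‖T 0‖) ^ 2 ≤ dist (A.f 0) (B.f ((k : ℝ) • T 0)) ^ 2 :=
      pow_le_pow_left₀ (by positivity) hfar 2
    rw [hkey, e2] at hsq
    have h6 := (div_lt_iff₀ (by positivity : (0:ℝ) < 2 * ‖T 0‖ ^ 2)).mp hk
    nlinarith
  have hb0 : dist (A.f 0) (B.f 0) ^ 2 = b ^ 2 := by
    have h7 := key 0 0
    simpa [ht0] using h7
  rw [hb0]
  have h8 := key v u
  rw [ht0] at h8
  simpa using h8

end TwoFlat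
section MidFlat

variable {n : ℕ} {X : Type*} [MetricSpace X]

local notation "V" => EuclideanSpace ℝ (Fin n)

variable {φ : EuclideanSpace ℝ (Fin n) → X}

theorem flat_infDist_const (hX : IsCAT0 X) {ψ ψ' : V → X} (hψ : Isometry ψ)
    (hψ' : Isometry ψ') {M : ℝ}
    (hM : ∀ v, Metric.infDist (ψ v) (Set.range ψ') ≤ M) :
    ∀ v u, Metric.infDist (ψ v) (Set.range ψ') = Metric.infDist (ψ u) (Set.range ψ') := by
  set q : V → ℝ := fun v => Metric.infDist (ψ v) (Set.range ψ') with hqd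
  have hq : ∀ u v : V, q ((2⁻¹ : ℝ) • (u + v)) ≤ (q u + q v) / 2 := by
    intro u v
    have hpu := pro_flat hX hψ' (ψ u)
    have hpv := pro_flat hX hψ' (ψ v)
    have hmA : ψ ((2⁻¹ : ℝ) • (u + v)) = mpt hX (ψ u) (ψ v) :=
      (flat_mpt_eq hX hψ).symm
    have hm' : mpt hX (pro (Set.range ψ') (ψ u)) (pro (Set.range ψ') (ψ v))
        ∈ Set.range ψ' := flat_mpt_mem hX hψ' hpu.1 hpv.1
    have hbus := busemann hX (mpt_spec hX (ψ u) (ψ v))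
      (mpt_spec hX (pro (Set.range ψ') (ψ u)) (pro (Set.range ψ') (ψ v)))
    have hle : q ((2⁻¹ : ℝ) • (u + v)) ≤ dist (mpt hX (ψ u) (ψ v))
        (mpt hX (pro (Set.range ψ') (ψ u)) (pro (Set.range ψ') (ψ v))) := by
      rw [hqd]
      simp only
      rw [hmA]
      exact Metric.infDist_le_dist_of_mem hm'
    have e1 : q u = dist (ψ u) (pro (Set.range ψ') (ψ u)) := infDist_isProj hpu
    have e2 : q v = dist (ψ v) (pro (Set.range ψ') (ψ v)) := infDist_isProj hpv
    rw [e1, e2]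
    linarith
  have hM' : ∀ v : V, |q v| ≤ M := by
    intro v
    rw [abs_le]
    have h0 : 0 ≤ q v := Metric.infDist_nonneg
    exact ⟨by linarith [hM v], hM v⟩
  intro v u
  exact mconstV hq hM' v u

theorem flat_dist_const (hX : IsCAT0 X) {ψ ψ' : V → X} (hψ : Isometry ψ)
    (hψ' : Isometry ψ') {M : ℝ} (hM : ∀ v, dist (ψ v) (ψ' v) ≤ M) :
    ∀ v u, dist (ψ v) (ψ' v) = dist (ψ u) (ψ' u) := by
  set q : V → ℝ := fun v => dist (ψ v) (ψ' v) with hqd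
  have hq : ∀ u v : V, q ((2⁻¹ : ℝ) • (u + v)) ≤ (q u + q v) / 2 := by
    intro u v
    have hmA : ψ ((2⁻¹ : ℝ) • (u + v)) = mpt hX (ψ u) (ψ v) := (flat_mpt_eq hX hψ).symm
    have hmB : ψ' ((2⁻¹ : ℝ) • (u + v)) = mpt hX (ψ' u) (ψ' v) := (flat_mpt_eq hX hψ').symm
    have hbus := busemann hX (mpt_spec hX (ψ u) (ψ v)) (mpt_spec hX (ψ' u) (ψ' v))
    rw [hqd]
    simp only
    rw [hmA, hmB]
    linarith
  have hM' : ∀ v : V, |q v| ≤ M := by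
    intro v
    rw [abs_le]
    have h0 : 0 ≤ q v := dist_nonneg
    exact ⟨by linarith [hM v], hM v⟩
  intro v u
  exact mconstV hq hM' v u

set_option maxHeartbeats 1600000 in
/-- The midpoint flat of two aligned parallel flats, with the universal
midpoint property. -/
theorem midflat (hX : IsCAT0 X) (hφ : Isometry φ) (A B : AFlat n X φ) :
    ∃ C : AFlat n X φ, ∀ v u (m : X), IsMidpoint (A.f v) (B.f u) m →
      m = C.f ((2⁻¹ : ℝ) • (v + u)) := by
  classical
  set b : ℝ := dist (A.f 0) (B.f 0) with hbd
  have hb0 : 0 ≤ b := dist_nonneg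
  have h2f := twoflat hX A B
  have hdAB : ∀ w : V, dist (A.f w) (B.f w) = b := by
    intro w
    apply eq_of_sq_eq dist_nonneg hb0
    have h := h2f w w
    simpa [hbd] using h
  set mf : V → X := fun w => mpt hX (A.f w) (B.f w) with hmfd
  have hmf : ∀ w, IsMidpoint (A.f w) (B.f w) (mf w) := fun w => mpt_spec hX _ _
  have D1A : ∀ u w : V, dist (A.f u) (mf w) ^ 2 ≤ ‖u - w‖ ^ 2 + b ^ 2 / 4 := by
    intro u w
    have bt := hX.2 (A.f w) (B.f w) (A.f u) (mf w) (hmf w)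
    rw [vdist A.iso, hdAB w] at bt
    have h2 := h2f u w
    rw [← hbd] at h2
    linarith [bt, h2]
  have D1B : ∀ u w : V, dist (B.f u) (mf w) ^ 2 ≤ ‖u - w‖ ^ 2 + b ^ 2 / 4 := by
    intro u w
    have bt := hX.2 (A.f w) (B.f w) (B.f u) (mf w) (hmf w)
    rw [hdAB w] at bt
    rw [dist_comm (B.f u) (B.f w), vdist B.iso, norm_sub_rev] at bt
    have h2 := h2f w u
    rw [dist_comm (A.f w) (B.f u), ← hbd] at h2
    have e : ‖w - u‖ = ‖u - w‖ := norm_sub_rev _ _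
    rw [e] at h2
    linarith [bt, h2]
  have upb : ∀ (p w : V) (T : ℝ), 0 < T → ‖p - w‖ = T →
      dist (B.f p) (mf w) ≤ T + b ^ 2 / (8 * T) := by
    intro p w T hT hpw
    apply le_of_sq_le_sq dist_nonneg (by positivity)
    have h := D1B p w
    rw [hpw] at h
    have e : (T + b ^ 2 / (8 * T)) ^ 2 = T ^ 2 + b ^ 2 / 4 + (b ^ 2 / (8 * T)) ^ 2 := by
      field_simp
      ring
    rw [e]
    nlinarith [sq_nonneg (b ^ 2 / (8 * T))]
  have upa : ∀ (p w : V) (T : ℝ), 0 < T → ‖p - w‖ = T →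
      dist (A.f p) (mf w) ≤ T + b ^ 2 / (8 * T) := by
    intro p w T hT hpw
    apply le_of_sq_le_sq dist_nonneg (by positivity)
    have h := D1A p w
    rw [hpw] at h
    have e : (T + b ^ 2 / (8 * T)) ^ 2 = T ^ 2 + b ^ 2 / 4 + (b ^ 2 / (8 * T)) ^ 2 := by
      field_simp
      ring
    rw [e]
    nlinarith [sq_nonneg (b ^ 2 / (8 * T))]
  have hTe : ∀ ε : ℝ, 0 < ε → b ^ 2 / (8 * max 1 (b ^ 2 / (8 * ε))) ≤ ε := by
    intro ε hε
    set T : ℝ := max 1 (b ^ 2 / (8 * ε)) with hTd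
    have hT1 : (1 : ℝ) ≤ T := le_max_left _ _
    have hT2 : b ^ 2 / (8 * ε) ≤ T := le_max_right _ _
    rw [div_le_iff₀ (by positivity : (0:ℝ) < 8 * T)]
    rw [div_le_iff₀ (by positivity : (0:ℝ) < 8 * ε)] at hT2
    nlinarith
  have D2far : ∀ u w : V, ‖u - w‖ ≤ dist (A.f u) (mf w) := by
    intro u w
    by_cases huw : u = w
    · subst huw
      simpa using dist_nonneg
    have hr : 0 < ‖u - w‖ := by rw [norm_pos_iff, sub_ne_zero]; exact huw
    set r := ‖u - w‖ with hrd
    apply le_of_forall_pos_le_add'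
    intro ε hε
    set T : ℝ := max 1 (b ^ 2 / (8 * ε)) with hTd
    have hT1 : (1 : ℝ) ≤ T := le_max_left _ _
    have hT0 : (0 : ℝ) < T := by linarith
    set p : V := w + (T / r) • (w - u) with hpd
    have hup2 : ‖u - p‖ = r + T := by
      have e : u - p = (1 + T / r) • (u - w) := by rw [hpd]; module
      rw [e, norm_smul, Real.norm_eq_abs, abs_of_pos (by positivity), ← hrd]
      field_simp
    have hpw : ‖p - w‖ = T := by
      have e : p - w = (T / r) • (w - u) := by rw [hpd]; abel
      rw [e, norm_smul, Real.norm_eq_abs, abs_of_pos (by positivity), norm_sub_rev, ← hrd]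
      field_simp
    have hlow : r + T ≤ dist (A.f u) (B.f p) := by
      apply le_of_sq_le_sq (by positivity) dist_nonneg
      rw [h2f u p, hup2]
      nlinarith [sq_nonneg b]
    have hup := upb p w T hT0 hpw
    have tri := dist_triangle (A.f u) (mf w) (B.f p)
    rw [dist_comm (mf w) (B.f p)] at tri
    have := hTe ε hε
    rw [← hTd] at this
    linarith
  have D3le : ∀ v u : V, dist (mf v) (mf u) ≤ ‖v - u‖ := by
    intro v u
    have hbus := busemann hX (hmf v) (hmf u)
    rw [vdist A.iso, vdist B.iso] at hbus
    linarith
  have D3 : ∀ v u : V, dist (mf v) (mf u) = ‖v - u‖ := by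
    intro v u
    refine le_antisymm (D3le v u) ?_
    by_cases hvu : v = u
    · subst hvu
      simpa using dist_nonneg
    have hr : 0 < ‖v - u‖ := by rw [norm_pos_iff, sub_ne_zero]; exact hvu
    set r := ‖v - u‖ with hrd
    apply le_of_forall_pos_le_add'
    intro ε hε
    set T : ℝ := max 1 (b ^ 2 / (8 * ε)) with hTd
    have hT1 : (1 : ℝ) ≤ T := le_max_left _ _
    have hT0 : (0 : ℝ) < T := by linarith
    set w : V := v + (T / r) • (v - u) with hwd
    have hwu : ‖w - u‖ = r + T := by
      have e : w - u = (1 + T / r) • (v - u) := by rw [hwd]; module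
      rw [e, norm_smul, Real.norm_eq_abs, abs_of_pos (by positivity), ← hrd]
      field_simp
    have hwv : ‖w - v‖ = T := by
      have e : w - v = (T / r) • (v - u) := by rw [hwd]; abel
      rw [e, norm_smul, Real.norm_eq_abs, abs_of_pos (by positivity), ← hrd]
      field_simp
    have hlow := D2far w u
    rw [hwu] at hlow
    have hup := upa w v T hT0 hwv
    have tri := dist_triangle (A.f w) (mf v) (mf u)
    have := hTe ε hε
    rw [← hTd] at this
    linarith
  have miso : Isometry mf := Isometry.of_dist_eq (by intro a c; rw [D3, dist_eq_norm])
  have D4 : ∀ (v u : V) (m : X), IsMidpoint (A.f v) (B.f u) m →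
      m = mf ((2⁻¹ : ℝ) • (v + u)) := by
    intro v u m hm
    set c : V := (2⁻¹ : ℝ) • (v + u) with hcd
    set D : ℝ := dist (A.f v) (B.f u) with hDd
    have hD0 : 0 ≤ D := dist_nonneg
    have hvc : ‖v - c‖ = ‖v - u‖ / 2 := by
      have e : v - c = (2⁻¹ : ℝ) • (v - u) := by rw [hcd]; module
      rw [e, norm_smul]
      simp
      ring
    have huc : ‖u - c‖ = ‖v - u‖ / 2 := by
      have e : u - c = -((2⁻¹ : ℝ) • (v - u)) := by rw [hcd]; module
      rw [e, norm_neg, norm_smul]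
      simp
      ring
    have hD2 : D ^ 2 = b ^ 2 + ‖v - u‖ ^ 2 := h2f v u
    have hα : dist (A.f v) (mf c) ≤ D / 2 := by
      apply le_of_sq_le_sq dist_nonneg (by positivity)
      have h := D1A v c
      rw [hvc] at h
      nlinarith
    have hβ : dist (B.f u) (mf c) ≤ D / 2 := by
      apply le_of_sq_le_sq dist_nonneg (by positivity)
      have h := D1B u c
      rw [huc] at h
      nlinarith
    have tri := dist_triangle (A.f v) (mf c) (B.f u)
    rw [dist_comm (mf c) (B.f u)] at tri
    have hmc : IsMidpoint (A.f v) (B.f u) (mf c) := by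
      constructor
      · rw [← hDd]; linarith
      · rw [← hDd]; linarith
    exact midpoint_unique hX hm hmc
  have hmfmid : ∀ v u : V, mf ((2⁻¹ : ℝ) • (v + u)) = mpt hX (mf v) (mf u) := by
    intro v u
    refine (mpt_eq hX ?_).symm
    constructor
    · rw [D3, D3]
      have e : v - (2⁻¹ : ℝ) • (v + u) = (2⁻¹ : ℝ) • (v - u) := by module
      rw [e, norm_smul]
      simp
      ring
    · rw [D3, D3]
      have e : u - (2⁻¹ : ℝ) • (v + u) = -((2⁻¹ : ℝ) • (v - u)) := by module
      rw [e, norm_neg, norm_smul]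
      simp [norm_sub_rev]
      ring
  have D5far : ∀ w s : V, ‖w - s‖ ≤ dist (mf w) (φ s) := by
    intro w s
    by_cases hws : w = s
    · subst hws
      simpa using dist_nonneg
    have hr : 0 < ‖w - s‖ := by rw [norm_pos_iff, sub_ne_zero]; exact hws
    set r := ‖w - s‖ with hrd
    apply le_of_forall_pos_le_add'
    intro ε hε
    set T : ℝ := max 1 (b ^ 2 / (8 * ε)) with hTd
    have hT1 : (1 : ℝ) ≤ T := le_max_left _ _
    have hT0 : (0 : ℝ) < T := by linarith
    set p : V := w + (T / r) • (w - s) with hpd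
    have hps : ‖p - s‖ = r + T := by
      have e : p - s = (1 + T / r) • (w - s) := by rw [hpd]; module
      rw [e, norm_smul, Real.norm_eq_abs, abs_of_pos (by positivity), ← hrd]
      field_simp
    have hpw : ‖p - w‖ = T := by
      have e : p - w = (T / r) • (w - s) := by rw [hpd]; abel
      rw [e, norm_smul, Real.norm_eq_abs, abs_of_pos (by positivity), ← hrd]
      field_simp
    have hlow := B.dist_ge' p s
    rw [hps] at hlow
    have hup := upb p w T hT0 hpw
    have tri := dist_triangle (B.f p) (mf w) (φ s)
    have := hTe ε hε
    rw [← hTd] at this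
    linarith
  -- parallelism of `M = range mf` with `E`
  have hmboundE : ∀ w : V, Metric.infDist (mf w) (Set.range φ) ≤ b / 2 + A.c := by
    intro w
    have h1 : Metric.infDist (mf w) (Set.range φ) ≤ dist (mf w) (φ w) :=
      Metric.infDist_le_dist_of_mem ⟨w, rfl⟩
    have h2 := dist_triangle (mf w) (A.f w) (φ w)
    have h3 : dist (mf w) (A.f w) = b / 2 := by
      rw [dist_comm, (hmf w).1, hdAB w]
    rw [h3, A.dist_base w] at h2
    linarith
  have hmboundF : ∀ s : V, Metric.infDist (φ s) (Set.range mf) ≤ b / 2 + A.c := by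
    intro s
    have h1 : Metric.infDist (φ s) (Set.range mf) ≤ dist (φ s) (mf s) :=
      Metric.infDist_le_dist_of_mem ⟨s, rfl⟩
    have h2 := dist_triangle (φ s) (A.f s) (mf s)
    have h3 : dist (A.f s) (mf s) = b / 2 := by rw [(hmf s).1, hdAB s]
    rw [h3] at h2
    have h4 : dist (φ s) (A.f s) = A.c := by rw [dist_comm]; exact A.dist_base s
    rw [h4] at h2
    linarith
  have hcE := flat_infDist_const hX miso hφ hmboundE
  have hcF := flat_infDist_const hX hφ miso hmboundF
  obtain ⟨C', hrange⟩ := mkAFlat hX hφ miso (c1 := Metric.infDist (mf 0) (Set.range φ))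
    (c2 := Metric.infDist (φ 0) (Set.range mf))
    (by rintro a ⟨w, rfl⟩; exact hcE w 0) (by rintro a ⟨s, rfl⟩; exact hcF s 0)
  -- identify `C'.f` with `mf`
  have hσe : ∀ w : V, ∃ u : V, C'.f u = mf w := by
    intro w
    have : mf w ∈ Set.range C'.f := by rw [hrange]; exact ⟨w, rfl⟩
    exact this
  set σ : V → V := fun w => (hσe w).choose with hσd
  have hσs : ∀ w, C'.f (σ w) = mf w := fun w => (hσe w).choose_spec
  have hσmid : ∀ v u : V, σ ((2⁻¹ : ℝ) • (v + u)) = (2⁻¹ : ℝ) • (σ v + σ u) := by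
    intro v u
    apply C'.iso.injective
    rw [hσs, hmfmid, ← hσs v, ← hσs u, flat_mpt_eq hX C'.iso]
  have hdg := flat_dist_const hX miso hφ (M := b / 2 + A.c) (by
    intro w
    have h2 := dist_triangle (mf w) (A.f w) (φ w)
    have h3 : dist (mf w) (A.f w) = b / 2 := by rw [dist_comm, (hmf w).1, hdAB w]
    rw [h3, A.dist_base w] at h2
    linarith)
  have hdisp : ∀ w : V, ‖σ w - w‖ = ‖σ 0 - 0‖ := by
    intro w
    apply eq_of_sq_eq (norm_nonneg _) (norm_nonneg _)
    have h1 := C'.pyth (σ w) w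
    have h2 := C'.pyth (σ 0) 0
    rw [hσs] at h1 h2
    have h3 := hdg w 0
    have h4 : dist (mf w) (φ w) ^ 2 = dist (mf 0) (φ 0) ^ 2 := by rw [h3]
    linarith [h1, h2, h4]
  have htr := midaff_translate hσmid hdisp
  have key : ∀ w s : V, dist (mf w) (φ s) ^ 2 = C'.c ^ 2 + ‖w + σ 0 - s‖ ^ 2 := by
    intro w s
    have h := C'.pyth (σ w) s
    rw [hσs, htr w] at h
    exact h
  have hσ0 : σ 0 = 0 := by
    by_contra hc
    have hpos : 0 < ‖σ 0‖ := by rwa [norm_pos_iff]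
    obtain ⟨k, hk⟩ := exists_nat_gt ((C'.c ^ 2 + ‖σ 0‖ ^ 2) / (2 * ‖σ 0‖ ^ 2))
    have hkey := key 0 ((k : ℝ) • σ 0)
    have hkpos : (0 : ℝ) < k := by
      refine lt_of_le_of_lt ?_ hk
      positivity
    have e1 : ‖(0 : V) - (k : ℝ) • σ 0‖ = (k : ℝ) * ‖σ 0‖ := by
      rw [zero_sub, norm_neg, norm_smul, Real.norm_eq_abs, abs_of_pos hkpos]
    have e2 : ‖(0 : V) + σ 0 - (k : ℝ) • σ 0‖ ^ 2 = ((k : ℝ) - 1) ^ 2 * ‖σ 0‖ ^ 2 := by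
      have e : (0 : V) + σ 0 - (k : ℝ) • σ 0 = -(((k : ℝ) - 1) • σ 0) := by module
      rw [e, norm_neg, norm_smul, Real.norm_eq_abs, mul_pow, sq_abs]
    have hfar := D5far 0 ((k : ℝ) • σ 0)
    rw [e1] at hfar
    have hsq : ((k : ℝ) * ‖σ 0‖) ^ 2 ≤ dist (mf 0) (φ ((k : ℝ) • σ 0)) ^ 2 :=
      pow_le_pow_left₀ (by positivity) hfar 2
    rw [hkey, e2] at hsq
    have h6 := (div_lt_iff₀ (by positivity : (0:ℝ) < 2 * ‖σ 0‖ ^ 2)).mp hk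
    nlinarith
  have identify : ∀ w : V, C'.f w = mf w := by
    intro w
    have h := hσs w
    rw [htr w, hσ0, add_zero] at h
    exact h
  refine ⟨⟨mf, miso, C'.c, C'.cnn, fun v s => by rw [← identify v]; exact C'.pyth v s⟩,
    ?_⟩
  intro v u m hm
  exact D4 v u m hm

end MidFlat
section Assemble

variable {n : ℕ} {X : Type*} [MetricSpace X]

local notation "V" => EuclideanSpace ℝ (Fin n)

variable {φ : EuclideanSpace ℝ (Fin n) → X}

theorem aflat_unique (hX : IsCAT0 X) (A B : AFlat n X φ) (h : A.f 0 = B.f 0) (v : V) :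
    A.f v = B.f v := by
  have h2 := twoflat hX A B v v
  rw [h] at h2
  simp at h2
  rw [← dist_eq_zero]
  have h3 : dist (A.f v) (B.f v) ^ 2 = 0 ^ 2 := by simpa using h2
  exact eq_of_sq_eq dist_nonneg (le_refl 0) h3

theorem exists_aflat_of_Y (hX : IsCAT0 X) (hφ : Isometry φ) {Y : Set X}
    (hY : Y = {y | ∃ F : Set X, IsNFlat n F ∧ ParallelSets F (Set.range φ) ∧ y ∈ F})
    {y : X} (hy : y ∈ Y) : ∃ (A : AFlat n X φ) (v : V), A.f v = y := by
  rw [hY] at hy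
  obtain ⟨F, ⟨ψ, hψ, hrψ⟩, ⟨⟨c1, hc1⟩, ⟨c2, hc2⟩⟩, hyF⟩ := hy
  have hFE : ∀ a ∈ Set.range ψ, Metric.infDist a (Set.range φ) = c1 := by
    intro a ha
    exact hc1 a (hrψ ▸ ha)
  have hEF : ∀ b ∈ Set.range φ, Metric.infDist b (Set.range ψ) = c2 := by
    intro b hb
    rw [hrψ]
    exact hc2 b hb
  obtain ⟨A, hA⟩ := mkAFlat hX hφ hψ hFE hEF
  have : y ∈ Set.range A.f := by rw [hA, hrψ]; exact hyF
  obtain ⟨v, hv⟩ := this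
  exact ⟨A, v, hv⟩

theorem range_sub_Y {Y : Set X}
    (hY : Y = {y | ∃ F : Set X, IsNFlat n F ∧ ParallelSets F (Set.range φ) ∧ y ∈ F})
    (A : AFlat n X φ) : Set.range A.f ⊆ Y := by
  rw [hY]
  rintro y ⟨v, rfl⟩
  refine ⟨Set.range A.f, ⟨A.f, A.iso, rfl⟩, ⟨⟨A.c, ?_⟩, ⟨A.c, ?_⟩⟩, ⟨v, rfl⟩⟩
  · rintro a ⟨w, rfl⟩
    exact A.infDistE w
  · rintro e ⟨s, rfl⟩
    exact A.infDistF s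

theorem mem_Z_iff (hX : IsCAT0 X) (hφ : Isometry φ) {x : X} (hx : x = φ 0) {Y : Set X}
    (hY : Y = {y | ∃ F : Set X, IsNFlat n F ∧ ParallelSets F (Set.range φ) ∧ y ∈ F})
    {Z : Set X}
    (hZ : Z = {y | y ∈ Y ∧ ∀ e ∈ Set.range φ, dist y x ≤ dist y e}) {z : X} :
    z ∈ Z ↔ ∃ A : AFlat n X φ, A.f 0 = z := by
  constructor
  · intro hz
    rw [hZ] at hz
    obtain ⟨hzY, hcond⟩ := hz
    obtain ⟨A, v₀, hv₀⟩ := exists_aflat_of_Y hX hφ hY hzY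
    have hc := hcond (φ v₀) ⟨v₀, rfl⟩
    have h1 : dist z (φ v₀) = A.c := by rw [← hv₀]; exact A.dist_base v₀
    have h2 : dist z x ^ 2 = A.c ^ 2 + ‖v₀‖ ^ 2 := by
      rw [← hv₀, hx]
      have := A.pyth v₀ 0
      simpa using this
    have h3 : dist z x ^ 2 ≤ dist z (φ v₀) ^ 2 := by
      have := dist_nonneg (x := z) (y := x)
      nlinarith
    rw [h1] at h3
    have h4 : ‖v₀‖ ^ 2 ≤ 0 := by linarith
    have h5 : v₀ = 0 := by
      rw [← norm_eq_zero]
      nlinarith [norm_nonneg v₀]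
    rw [← h5]
    exact ⟨A, hv₀⟩
  · rintro ⟨A, rfl⟩
    rw [hZ]
    refine ⟨range_sub_Y hY A ⟨0, rfl⟩, ?_⟩
    rintro e ⟨s, rfl⟩
    have h1 : dist (A.f 0) x = A.c := by rw [hx]; exact A.dist_base 0
    rw [h1]
    exact A.dist_ge 0 s

end Assemble

end CAT0W

open CAT0W in
theorem stmt8 {X : Type*} [MetricSpace X] [CompleteSpace X] (hX : IsCAT0 X)
    {n : ℕ} (hn : 1 ≤ n)
    (φ : EuclideanSpace ℝ (Fin n) → X) (hφ : Isometry φ)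
    (x : X) (hx : x = φ 0)
    -- `Y` is the union of all `n`-flats parallel to `E = range φ`
    (Y : Set X)
    (hY : Y = {y | ∃ F : Set X, IsNFlat n F ∧ ParallelSets F (Set.range φ) ∧ y ∈ F})
    -- `Z = {y ∈ Y : d(y,x) ≤ d(y,e) for all e ∈ E}`
    (Z : Set X)
    (hZ : Z = {y | y ∈ Y ∧ ∀ e ∈ Set.range φ, dist y x ≤ dist y e}) :
    -- (a)
    IsClosed Y ∧ ConvexSubset Y ∧ Set.range φ ⊆ Y ∧
    -- (b)
    IsClosed Z ∧ ConvexSubset Z ∧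
    -- (c) the product decomposition `Y ≅ ℝⁿ × Z`
    ∃ Φ : EuclideanSpace ℝ (Fin n) → X → X,
      (∀ v : EuclideanSpace ℝ (Fin n), ∀ z ∈ Z, Φ v z ∈ Y) ∧
      (∀ y ∈ Y, ∃! p : EuclideanSpace ℝ (Fin n) × X, p.2 ∈ Z ∧ Φ p.1 p.2 = y) ∧
      (∀ v : EuclideanSpace ℝ (Fin n), Φ v x = φ v) ∧
      (∀ z ∈ Z, Φ 0 z = z) ∧
      (∀ v v' : EuclideanSpace ℝ (Fin n), ∀ z ∈ Z, ∀ z' ∈ Z,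
        dist (Φ v z) (Φ v' z') ^ 2 = ‖v - v'‖ ^ 2 + dist z z' ^ 2) := by
  classical
  -- closedness of Y
  have hYc : IsClosed Y := by
    apply IsSeqClosed.isClosed
    intro ys y hmem hlim
    choose A v hAv using fun k => exists_aflat_of_Y hX hφ hY (hmem k)
    have hck : ∀ k, (A k).c = dist ((A k).f 0) x := fun k => by
      rw [hx]; exact ((A k).dist_base 0).symm
    have hdz : ∀ k l, dist ((A k).f 0) ((A l).f 0) ≤ dist (ys k) (ys l) := by
      intro k l
      apply CAT0W.le_of_sq_le_sq dist_nonneg dist_nonneg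
      have h := twoflat hX (A k) (A l) (v k) (v l)
      rw [hAv k, hAv l] at h
      nlinarith [sq_nonneg ‖v k - v l‖]
    have hdv : ∀ k l, dist (v k) (v l) ≤ dist (ys k) (ys l) := by
      intro k l
      apply CAT0W.le_of_sq_le_sq dist_nonneg dist_nonneg
      have h := twoflat hX (A k) (A l) (v k) (v l)
      rw [hAv k, hAv l] at h
      rw [dist_eq_norm]
      nlinarith [dist_nonneg (x := (A k).f 0) (y := (A l).f 0),
        sq_nonneg (dist ((A k).f 0) ((A l).f 0))]
    have hysc : CauchySeq ys := hlim.cauchySeq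
    rw [Metric.cauchySeq_iff] at hysc
    have hvc : CauchySeq v := by
      rw [Metric.cauchySeq_iff]
      intro ε hε
      obtain ⟨N, hN⟩ := hysc ε hε
      exact ⟨N, fun m hm k hk => lt_of_le_of_lt (hdv m k) (hN m hm k hk)⟩
    obtain ⟨vstar, hvstar⟩ := cauchySeq_tendsto_of_complete hvc
    have hwc : ∀ w : EuclideanSpace ℝ (Fin n),
        ∃ p : X, Filter.Tendsto (fun k => (A k).f w) Filter.atTop (nhds p) := by
      intro w
      apply cauchySeq_tendsto_of_complete
      rw [Metric.cauchySeq_iff]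
      intro ε hε
      obtain ⟨N, hN⟩ := hysc ε hε
      refine ⟨N, fun m hm k hk => ?_⟩
      have he : dist ((A m).f w) ((A k).f w) = dist ((A m).f 0) ((A k).f 0) := by
        apply CAT0W.eq_of_sq_eq dist_nonneg dist_nonneg
        have h := twoflat hX (A m) (A k) w w
        simpa using h
      rw [he]
      exact lt_of_le_of_lt (hdz m k) (hN m hm k hk)
    choose g hg using hwc
    have giso : Isometry g := by
      apply Isometry.of_dist_eq
      intro w u
      have t1 := ((hg w).dist (hg u))
      have t2 : (fun k => dist ((A k).f w) ((A k).f u)) = fun _ => ‖w - u‖ :=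
        funext fun k => vdist (A k).iso w u
      rw [t2] at t1
      have h5 := tendsto_nhds_unique t1 tendsto_const_nhds
      rw [dist_eq_norm]
      exact h5
    have gpyth : ∀ w s, dist (g w) (φ s) ^ 2 = dist (g 0) x ^ 2 + ‖w - s‖ ^ 2 := by
      intro w s
      have t1 := (((hg w).dist (tendsto_const_nhds (x := φ s)))).pow 2
      have t2 : (fun k => dist ((A k).f w) (φ s) ^ 2)
          = fun k => dist ((A k).f 0) x ^ 2 + ‖w - s‖ ^ 2 := by
        funext k
        rw [(A k).pyth w s, hck k]
      rw [t2] at t1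
      have t3 : Filter.Tendsto (fun k => dist ((A k).f 0) x ^ 2 + ‖w - s‖ ^ 2)
          Filter.atTop (nhds (dist (g 0) x ^ 2 + ‖w - s‖ ^ 2)) := by
        exact (((hg 0).dist tendsto_const_nhds).pow 2).add tendsto_const_nhds
      exact tendsto_nhds_unique t1 t3
    set G : AFlat n X φ := ⟨g, giso, dist (g 0) x, dist_nonneg, gpyth⟩ with hGd
    have hyg : Filter.Tendsto ys Filter.atTop (nhds (g vstar)) := by
      rw [tendsto_iff_dist_tendsto_zero]
      apply squeeze_zero (fun k => dist_nonneg)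
        (g := fun k => ‖v k - vstar‖ + dist ((A k).f vstar) (g vstar))
      · intro k
        have tri := dist_triangle (ys k) ((A k).f vstar) (g vstar)
        have e : dist (ys k) ((A k).f vstar) = ‖v k - vstar‖ := by
          rw [← hAv k]
          exact vdist (A k).iso _ _
        linarith
      · have t1 : Filter.Tendsto (fun k => ‖v k - vstar‖) Filter.atTop (nhds 0) := by
          have h := tendsto_iff_dist_tendsto_zero.mp hvstar
          have e : (fun k => dist (v k) vstar) = fun k => ‖v k - vstar‖ :=
            funext fun k => dist_eq_norm _ _
          rwa [e] at h
        have t2 := tendsto_iff_dist_tendsto_zero.mp (hg vstar)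
        have := t1.add t2
        simpa using this
    have hyeq : y = g vstar := tendsto_nhds_unique hlim hyg
    have : g vstar ∈ Y := range_sub_Y hY G ⟨vstar, rfl⟩
    rwa [hyeq]
  -- convexity of Y
  have hYconv : ConvexSubset Y := by
    intro y1 h1 y2 h2 m hm
    obtain ⟨A, v, hv⟩ := exists_aflat_of_Y hX hφ hY h1
    obtain ⟨B, u, hu⟩ := exists_aflat_of_Y hX hφ hY h2
    obtain ⟨C, hC⟩ := midflat hX hφ A B
    rw [← hv, ← hu] at hm
    have := hC v u m hm
    rw [this]
    exact range_sub_Y hY C ⟨_, rfl⟩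
  have hEY : Set.range φ ⊆ Y := by
    have h := range_sub_Y hY (EFlat hφ)
    rwa [EFlat_f] at h
  -- closedness of Z
  have hZc : IsClosed Z := by
    have he : Z = Y ∩ ⋂ e ∈ Set.range φ, {y | dist y x ≤ dist y e} := by
      rw [hZ]
      ext y
      simp
    rw [he]
    exact hYc.inter (isClosed_biInter fun e _ =>
      isClosed_le (Continuous.dist continuous_id continuous_const)
        (Continuous.dist continuous_id continuous_const))
  -- convexity of Z
  have hZconv : ConvexSubset Z := by
    intro z1 hz1 z2 hz2 m hm
    obtain ⟨A, hA⟩ := (mem_Z_iff hX hφ hx hY hZ).mp hz1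
    obtain ⟨B, hB⟩ := (mem_Z_iff hX hφ hx hY hZ).mp hz2
    obtain ⟨C, hC⟩ := midflat hX hφ A B
    rw [← hA, ← hB] at hm
    have h0 : m = C.f 0 := by
      have := hC 0 0 m hm
      simpa using this
    exact (mem_Z_iff hX hφ hx hY hZ).mpr ⟨C, h0.symm⟩
  refine ⟨hYc, hYconv, hEY, hZc, hZconv, ?_⟩
  set Φf : EuclideanSpace ℝ (Fin n) → X → X := fun v z =>
    if h : ∃ A : AFlat n X φ, A.f 0 = z then h.choose.f v else z with hΦd
  have hΦeq : ∀ (v : EuclideanSpace ℝ (Fin n)) (z : X) (A : AFlat n X φ),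
      A.f 0 = z → Φf v z = A.f v := by
    intro v z A hA
    rw [hΦd]
    simp only
    rw [dif_pos ⟨A, hA⟩]
    have hspec := (⟨A, hA⟩ : ∃ B : AFlat n X φ, B.f 0 = z).choose_spec
    exact aflat_unique hX _ A (by rw [hspec, hA]) v
  refine ⟨Φf, ?_, ?_, ?_, ?_, ?_⟩
  · -- maps into Y
    intro v z hz
    obtain ⟨A, hA⟩ := (mem_Z_iff hX hφ hx hY hZ).mp hz
    rw [hΦeq v z A hA]
    exact range_sub_Y hY A ⟨v, rfl⟩
  · -- unique decomposition
    intro y hy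
    obtain ⟨A, v, hv⟩ := exists_aflat_of_Y hX hφ hY hy
    refine ⟨(v, A.f 0), ⟨(mem_Z_iff hX hφ hx hY hZ).mpr ⟨A, rfl⟩, ?_⟩, ?_⟩
    · rw [hΦeq v (A.f 0) A rfl]
      exact hv
    · rintro ⟨v', z'⟩ ⟨hz', hy'⟩
      obtain ⟨B, hB0⟩ := (mem_Z_iff hX hφ hx hY hZ).mp hz'
      have hB : B.f 0 = z' := hB0
      simp only at hy'
      rw [hΦeq v' z' B hB] at hy'
      have hdd : dist (A.f v) (B.f v') = 0 := by
        rw [hv, hy', dist_self]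
      have h2 := twoflat hX A B v v'
      rw [hdd] at h2
      have hn1 : ‖v - v'‖ = 0 := by
        nlinarith [dist_nonneg (x := A.f 0) (y := B.f 0), norm_nonneg (v - v'),
          sq_nonneg (dist (A.f 0) (B.f 0))]
      have hn2 : dist (A.f 0) (B.f 0) = 0 := by
        nlinarith [dist_nonneg (x := A.f 0) (y := B.f 0), norm_nonneg (v - v')]
      have hveq : v' = v := by
        have := sub_eq_zero.mp (norm_eq_zero.mp hn1)
        exact this.symm
      have hzeq : z' = A.f 0 := by
        rw [← hB]
        exact (dist_eq_zero.mp hn2).symm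
      refine Prod.ext_iff.mpr ⟨?_, ?_⟩
      · simpa using hveq
      · simpa using hzeq
  · -- Φ v x = φ v
    intro v
    have hEx : (EFlat hφ).f 0 = x := by rw [EFlat_f, hx]
    rw [hΦeq v x (EFlat hφ) hEx, EFlat_f]
  · -- Φ 0 z = z
    intro z hz
    obtain ⟨A, hA⟩ := (mem_Z_iff hX hφ hx hY hZ).mp hz
    rw [hΦeq 0 z A hA]
    exact hA
  · -- the distance formula
    intro v v' z hz z' hz'
    obtain ⟨A, hA⟩ := (mem_Z_iff hX hφ hx hY hZ).mp hz
    obtain ⟨B, hB⟩ := (mem_Z_iff hX hφ hx hY hZ).mp hz'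
    rw [hΦeq v z A hA, hΦeq v' z' B hB]
    have h2 := twoflat hX A B v v'
    rw [hA, hB] at h2
    rw [h2]
    ring
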